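/- There exists a finite simple graph that is bipartite, 2-inductive, has maximum degree at most 3 and girth 6, and is not 5-D2-edge-colorable, i.e., it admits no distance-2 edge coloring with 5 colors. -/

import Mathlib

open SimpleGraph

/-- Two edges `e` and `f` of a simple graph `G` are within distance 2 of each other:
they are distinct edges of `G` and either they are adjacent (share an endpoint) or
there is some other edge of `G` adjacent to both of them. -/
def WithinDist2 {V : Type*} (G : SimpleGraph V) (e f : Sym2 V) : Prop :=
  e ∈ G.edgeSet ∧ f ∈ G.edgeSet ∧ e ≠ f ∧
    ((∃ v, v ∈ e ∧ v ∈ f) ∨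
      ∃ g ∈ G.edgeSet, g ≠ e ∧ g ≠ f ∧ (∃ v, v ∈ e ∧ v ∈ g) ∧ (∃ v, v ∈ g ∧ v ∈ f))

/-- A distance-2 edge coloring (strong edge coloring) of `G` with `k` colors:
any two distinct edges within distance 2 of each other receive distinct colors. -/
def IsD2EdgeColoring {V : Type*} (G : SimpleGraph V) (k : ℕ) (c : Sym2 V → Fin k) : Prop :=
  ∀ e f : Sym2 V, WithinDist2 G e f → c e ≠ c f

/-- A graph `G` is `c`-inductive if its vertices can be numbered (linearly ordered)
so that each vertex has at most `c` neighbors with higher numbers. -/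
def IsInductive {V : Type*} (G : SimpleGraph V) (c : ℕ) : Prop :=
  ∃ f : V → ℕ, Function.Injective f ∧ ∀ v : V, {w : V | G.Adj v w ∧ f v < f w}.ncard ≤ c

/-! ### The example: the Heawood graph minus one edge -/

/-- Edge list of the Heawood graph minus the edge (0,1). -/
def adjL : List (ℕ × ℕ) :=
  [(0,5),(0,13),(1,2),(1,10),(2,3),(2,7),(3,4),(3,12),(4,5),(4,9),
   (5,6),(6,7),(6,11),(7,8),(8,9),(8,13),(9,10),(10,11),(11,12),(12,13)]

def adjB (a b : Fin 14) : Bool := decide ((a.val, b.val) ∈ adjL) || decide ((b.val, a.val) ∈ adjL)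

theorem adj_symm : ∀ a b : Fin 14, adjB a b = true → adjB b a = true := by decide
theorem adj_irrefl : ∀ a : Fin 14, ¬ adjB a a = true := by decide

def H : SimpleGraph (Fin 14) where
  Adj a b := adjB a b = true
  symm := ⟨fun a b h => adj_symm a b h⟩
  loopless := ⟨fun a h => adj_irrefl a h⟩

instance : DecidableRel H.Adj := fun a b => inferInstanceAs (Decidable (adjB a b = true))

instance (e f : Sym2 (Fin 14)) : Decidable (WithinDist2 H e f) := by
  unfold WithinDist2; infer_instance

/-- 16 chosen edges of `H`. -/
def SE : Fin 16 → Sym2 (Fin 14) := fun i =>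
  match i.val with
  | 0 => s(5,6) | 1 => s(10,11) | 2 => s(6,7) | 3 => s(4,5)
  | 4 => s(8,9) | 5 => s(2,3) | 6 => s(3,4) | 7 => s(12,13)
  | 8 => s(11,12) | 9 => s(3,12) | 10 => s(0,13) | 11 => s(6,11)
  | 12 => s(9,10) | 13 => s(2,7) | 14 => s(8,13) | _ => s(7,8)

/-- Bitmask rows of the conflict (distance-2) relation among the 16 chosen edges. -/
def rows : Fin 16 → ℕ := fun i =>
  match i.val with
  | 0 => 44366 | 1 => 7061 | 2 => 59707 | 3 => 7797
  | 4 => 62670 | 5 => 41932 | 6 => 13241 | 7 => 53106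
  | 8 => 24295 | 9 => 28138 | 10 => 50073 | 11 => 45967
  | 12 => 51546 | 13 => 51829 | 14 => 46996 | _ => 31925

def confB (i j : Fin 16) : Bool := Nat.testBit (rows i) j.val

set_option maxRecDepth 10000 in
theorem factB : ∀ i j : Fin 16, confB i j = true → WithinDist2 H (SE i) (SE j) := by decide

set_option maxRecDepth 10000 in
set_option maxHeartbeats 2000000 in
/-- For any independent (conflict-free) triple among the 16 edges, every other of the 16
edges conflicts with one of the three. -/
theorem factT : ∀ i j k : Fin 16, i ≠ j → i ≠ k → j ≠ k →
    confB i j = false → confB i k = false → confB j k = false →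
    (rows i ||| rows j ||| rows k ||| 2 ^ i.val ||| 2 ^ j.val ||| 2 ^ k.val) = 65535 := by
  decide

theorem bit16 : ∀ l : Fin 16, Nat.testBit 65535 l.val = true := by decide

/-- Among any four distinct chosen edges, two are in conflict. -/
theorem quad : ∀ i j k l : Fin 16, i ≠ j → i ≠ k → i ≠ l → j ≠ k → j ≠ l → k ≠ l →
    confB i j = true ∨ confB i k = true ∨ confB j k = true ∨
    confB i l = true ∨ confB j l = true ∨ confB k l = true := by
  intro i j k l hij hik hil hjk hjl hkl
  by_cases h1 : confB i j = true
  · exact Or.inl h1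
  by_cases h2 : confB i k = true
  · exact Or.inr (Or.inl h2)
  by_cases h3 : confB j k = true
  · exact Or.inr (Or.inr (Or.inl h3))
  have hT := factT i j k hij hik hjk (by simpa using h1) (by simpa using h2) (by simpa using h3)
  have hb := bit16 l
  rw [← hT] at hb
  simp only [Nat.testBit_or] at hb
  rw [Nat.testBit_two_pow_of_ne (fun h => hil (Fin.val_injective h)),
      Nat.testBit_two_pow_of_ne (fun h => hjl (Fin.val_injective h)),
      Nat.testBit_two_pow_of_ne (fun h => hkl (Fin.val_injective h))] at hb
  simp only [Bool.or_false, Bool.or_eq_true] at hb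
  rcases hb with (hb | hb) | hb
  · exact Or.inr (Or.inr (Or.inr (Or.inl hb)))
  · exact Or.inr (Or.inr (Or.inr (Or.inr (Or.inl hb))))
  · exact Or.inr (Or.inr (Or.inr (Or.inr (Or.inr hb))))

/-! ### Small decidable facts about `H` -/

def colf : Fin 14 → Fin 2 := fun v => ⟨v.val % 2, Nat.mod_lt _ (by norm_num)⟩

theorem colf_proper : ∀ a b : Fin 14, H.Adj a b → colf a ≠ colf b := by decide

theorem parity_step : ∀ a b : Fin 14, H.Adj a b →
    ((a.val : ZMod 2)) + 1 = (b.val : ZMod 2) := by decide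

theorem deg3 : ∀ v : Fin 14, (H.neighborSet v).toFinset.card ≤ 3 := by decide

theorem ind2 : ∀ v : Fin 14,
    ({w : Fin 14 | H.Adj v w ∧ (v : ℕ) < (w : ℕ)}).toFinset.card ≤ 2 := by decide

theorem cnFact : ∀ x y : Fin 14, x ≠ y →
    (Finset.univ.filter (fun z => adjB x z && adjB y z)).card ≤ 1 := by decide

/-! ### Girth facts -/

theorem walk_parity {u v : Fin 14} (w : H.Walk u v) :
    ((u.val : ZMod 2)) + w.length = (v.val : ZMod 2) := by
  induction w with
  | nil => simp
  | cons h p ih =>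
    rename_i a b c
    have hstep := parity_step a b h
    rw [Walk.length_cons]
    push_cast
    linear_combination ih + hstep

theorem closed_even {a : Fin 14} (w : H.Walk a a) : 2 ∣ w.length := by
  have h := walk_parity w
  have h0 : ((w.length : ℕ) : ZMod 2) = 0 := by linear_combination h
  exact (ZMod.natCast_eq_zero_iff _ 2).mp h0

theorem no4cycle : ∀ (a : Fin 14) (w : H.Walk a a), w.IsCycle → w.length ≠ 4 := by
  intro a w hw hlen
  cases w with
  | nil => simp at hlen
  | cons h1 p =>
    cases p with
    | nil => simp at hlen
    | cons h2 p =>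
      cases p with
      | nil => simp at hlen
      | cons h3 p =>
        cases p with
        | nil => simp at hlen
        | cons h4 p =>
          cases p with
          | cons h5 p => simp [Walk.length_cons] at hlen
          | nil =>
            rename_i b c d
            -- h1 : H.Adj a b, h2 : H.Adj b c, h3 : H.Adj c d, h4 : H.Adj d a
            have hnd := hw.2
            simp [Walk.support_cons, Walk.support_nil, List.nodup_cons] at hnd
            -- extract distinctness
            have hbd : b ≠ d := by tauto
            have hca : c ≠ a := by tauto
            -- b and d are common neighbors of a and c
            have hb : b ∈ Finset.univ.filter (fun z => adjB a z && adjB c z) := by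
              refine Finset.mem_filter.mpr ⟨Finset.mem_univ _, ?_⟩
              simp only [Bool.and_eq_true]
              exact ⟨h1, adj_symm b c h2⟩
            have hd : d ∈ Finset.univ.filter (fun z => adjB a z && adjB c z) := by
              refine Finset.mem_filter.mpr ⟨Finset.mem_univ _, ?_⟩
              simp only [Bool.and_eq_true]
              exact ⟨adj_symm d a h4, h3⟩
            have h2card : 1 < (Finset.univ.filter (fun z => adjB a z && adjB c z)).card :=
              Finset.one_lt_card.mpr ⟨b, hb, d, hd, hbd⟩
            exact absurd (cnFact a c hca.symm) (by omega)

def c6 : H.Walk (2 : Fin 14) (2 : Fin 14) :=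
  Walk.cons (show H.Adj 2 3 by decide)
    (Walk.cons (show H.Adj 3 4 by decide)
      (Walk.cons (show H.Adj 4 5 by decide)
        (Walk.cons (show H.Adj 5 6 by decide)
          (Walk.cons (show H.Adj 6 7 by decide)
            (Walk.cons (show H.Adj 7 2 by decide) Walk.nil)))))

theorem c6_isCycle : c6.IsCycle := by
  rw [Walk.isCycle_def]
  refine ⟨⟨?_⟩, by simp [c6], ?_⟩
  · decide
  · decide

theorem egirth_H : H.egirth = 6 := by
  apply le_antisymm
  · have h1 : H.egirth ≤ (c6.length : ℕ∞) := by
      unfold SimpleGraph.egirth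
      exact iInf_le_of_le 2 (iInf_le_of_le c6 (iInf_le_of_le c6_isCycle le_rfl))
    simpa [c6] using h1
  · rw [le_egirth]
    intro a w hw
    have h3 := hw.three_le_length
    have h4 := no4cycle a w hw
    obtain ⟨r, hr⟩ := closed_even w
    have h6 : 6 ≤ w.length := by omega
    exact_mod_cast h6

/-! ### Main theorem -/

/-- There is a finite simple bipartite 2-inductive graph with maximum degree at most 3 and
girth 6 that admits no distance-2 edge coloring with 5 colors. -/
theorem exists_non_5_d2_colorable :
    ∃ (V : Type) (_ : Fintype V) (G : SimpleGraph V),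
      G.Colorable 2 ∧
      IsInductive G 2 ∧
      (∀ v : V, (G.neighborSet v).ncard ≤ 3) ∧
      G.egirth = 6 ∧
      ¬ ∃ c : Sym2 V → Fin 5, IsD2EdgeColoring G 5 c := by
  refine ⟨Fin 14, inferInstance, H, ?_, ?_, ?_, egirth_H, ?_⟩
  · exact ⟨SimpleGraph.Coloring.mk colf (fun {a b} h => colf_proper a b h)⟩
  · refine ⟨fun v => (v : ℕ), Fin.val_injective, fun v => ?_⟩
    rw [Set.ncard_eq_toFinset_card']
    exact ind2 v
  · intro v
    rw [Set.ncard_eq_toFinset_card']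
    exact deg3 v
  · rintro ⟨c, hc⟩
    have hmap : ∀ i ∈ (Finset.univ : Finset (Fin 16)),
        c (SE i) ∈ (Finset.univ : Finset (Fin 5)) := fun i _ => Finset.mem_univ _
    have hcard : (Finset.univ : Finset (Fin 5)).card * 3 <
        (Finset.univ : Finset (Fin 16)).card := by simp
    obtain ⟨y, -, hy⟩ :=
      Finset.exists_lt_card_fiber_of_mul_lt_card_of_maps_to hmap hcard
    obtain ⟨t, ht, h4⟩ := Finset.exists_subset_card_eq (show 4 ≤ (Finset.univ.filter (fun x => c (SE x) = y)).card by omega)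
    obtain ⟨i, hi⟩ := Finset.card_pos.mp (show 0 < t.card by omega)
    have h3 : (t.erase i).card = 3 := by rw [Finset.card_erase_of_mem hi, h4]
    obtain ⟨j, k, l, hjk, hjl, hkl, hrest⟩ := Finset.card_eq_three.mp h3
    have hj : j ∈ t.erase i := by rw [hrest]; simp
    have hk : k ∈ t.erase i := by rw [hrest]; simp
    have hl : l ∈ t.erase i := by rw [hrest]; simp
    have hij : i ≠ j := (Finset.ne_of_mem_erase hj).symm
    have hik : i ≠ k := (Finset.ne_of_mem_erase hk).symm
    have hil : i ≠ l := (Finset.ne_of_mem_erase hl).symm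
    have hcol : ∀ x ∈ t, c (SE x) = y := fun x hx =>
      (Finset.mem_filter.mp (ht hx)).2
    have hci := hcol i hi
    have hcj := hcol j (Finset.mem_of_mem_erase hj)
    have hck := hcol k (Finset.mem_of_mem_erase hk)
    have hcl := hcol l (Finset.mem_of_mem_erase hl)
    rcases quad i j k l hij hik hil hjk hjl hkl with h | h | h | h | h | h
    · exact hc _ _ (factB i j h) (by rw [hci, hcj])
    · exact hc _ _ (factB i k h) (by rw [hci, hck])
    · exact hc _ _ (factB j k h) (by rw [hcj, hck])
    · exact hc _ _ (factB i l h) (by rw [hci, hcl])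
    · exact hc _ _ (factB j l h) (by rw [hcj, hcl])
    · exact hc _ _ (factB k l h) (by rw [hck, hcl])
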